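/- The map μ ↦ μ̃ maps the set of polyconvex measures with compact support in M^{2×2}_+ bijectively onto itself: if μ is a compactly supported Borel probability measure on M^{2×2}_+ with ∫ det X dμ(X) = det(μ̄), then μ̃ is also a compactly supported Borel probability measure on M^{2×2}_+ satisfying ∫ det X dμ̃(X) = det((μ̃)‾), and the map is an involution on this set. -/

import Mathlib

open MeasureTheory

noncomputable section

instance matrixMeasurableSpace {m n : ℕ} : MeasurableSpace (Matrix (Fin m) (Fin n) ℝ) :=
  show MeasurableSpace (Fin m → Fin n → ℝ) from inferInstance

/-- The Jacobian matrix of `φ : ℝⁿ → ℝᵐ` at `x`. -/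
def jacobianM (m n : ℕ) (φ : (Fin n → ℝ) → (Fin m → ℝ)) (x : Fin n → ℝ) :
    Matrix (Fin m) (Fin n) ℝ :=
  Matrix.of fun i j => fderiv ℝ φ x (Pi.single j 1) i

/-- `f : ℝ^{m×n} → ℝ` is quasiconvex: `f` is Borel measurable, locally bounded, and for every
nonempty bounded open `Ω ⊆ ℝⁿ`, every `X₀` and every smooth `φ` compactly supported in `Ω`,
`f X₀ * |Ω| ≤ ∫_Ω f (X₀ + Dφ x) dx`. -/
def IsQuasiconvex {m n : ℕ} (f : Matrix (Fin m) (Fin n) ℝ → ℝ) : Prop :=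
  Measurable f ∧
  (∀ K : Set (Matrix (Fin m) (Fin n) ℝ), IsCompact K → ∃ C : ℝ, ∀ X ∈ K, |f X| ≤ C) ∧
  ∀ Ω : Set (Fin n → ℝ), IsOpen Ω → Ω.Nonempty → Bornology.IsBounded Ω →
    ∀ (X₀ : Matrix (Fin m) (Fin n) ℝ) (φ : (Fin n → ℝ) → (Fin m → ℝ)),
      ContDiff ℝ (⊤ : ℕ∞) φ → HasCompactSupport φ → tsupport φ ⊆ Ω →
      f X₀ * (volume Ω).toReal ≤ ∫ x in Ω, f (X₀ + jacobianM m n φ x)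

/-- `f : ℝ^{m×n} → ℝ` is rank-one convex. -/
def IsRankOneConvex {m n : ℕ} (f : Matrix (Fin m) (Fin n) ℝ → ℝ) : Prop :=
  ∀ X Y : Matrix (Fin m) (Fin n) ℝ, (X - Y).rank ≤ 1 →
    ∀ t : ℝ, t ∈ Set.Icc (0 : ℝ) 1 →
      f (t • X + (1 - t) • Y) ≤ t * f X + (1 - t) * f Y

/-- The barycentre `μ̄ = ∫ X dμ(X)`, computed entrywise. -/
def matBarycenter {m n : ℕ} (μ : Measure (Matrix (Fin m) (Fin n) ℝ)) :
    Matrix (Fin m) (Fin n) ℝ :=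
  Matrix.of fun i j => ∫ X, X i j ∂μ

/-- `M^{2×n}_tri`: second row is `(0, …, 0, a)`. -/
def Mtri (n : ℕ) : Set (Matrix (Fin 2) (Fin n) ℝ) :=
  {X | ∀ j : Fin n, (j : ℕ) + 1 < n → X 1 j = 0}

/-- `M^{2×n}_diag`: first row `(a₁, …, a_{n-1}, 0)`, second row `(0, …, 0, b)`. -/
def Mdiag (n : ℕ) : Set (Matrix (Fin 2) (Fin n) ℝ) :=
  {X | (∀ j : Fin n, (j : ℕ) + 1 < n → X 1 j = 0) ∧
       (∀ j : Fin n, (j : ℕ) + 1 = n → X 0 j = 0)}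

/-- The orthogonal projection of `ℝ^{2×n}` onto `M^{2×n}_diag`. -/
def Pdiag (n : ℕ) (X : Matrix (Fin 2) (Fin n) ℝ) : Matrix (Fin 2) (Fin n) ℝ :=
  Matrix.of fun i j =>
    if i = 0 then (if (j : ℕ) + 1 < n then X 0 j else 0)
    else (if (j : ℕ) + 1 = n then X 1 j else 0)

/-- A homogeneous gradient Young measure: a compactly supported Borel probability measure
satisfying Jensen's inequality for all quasiconvex functions. -/
def IsHomogeneousGradientYoungMeasure {m n : ℕ}
    (μ : Measure (Matrix (Fin m) (Fin n) ℝ)) : Prop :=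
  IsProbabilityMeasure μ ∧ (∃ K, IsCompact K ∧ μ Kᶜ = 0) ∧
  ∀ f : Matrix (Fin m) (Fin n) ℝ → ℝ, IsQuasiconvex f →
    f (matBarycenter μ) ≤ ∫ X, f X ∂μ

/-- A laminate: a compactly supported Borel probability measure
satisfying Jensen's inequality for all rank-one convex functions. -/
def IsLaminate {m n : ℕ} (μ : Measure (Matrix (Fin m) (Fin n) ℝ)) : Prop :=
  IsProbabilityMeasure μ ∧ (∃ K, IsCompact K ∧ μ Kᶜ = 0) ∧
  ∀ f : Matrix (Fin m) (Fin n) ℝ → ℝ, IsRankOneConvex f →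
    f (matBarycenter μ) ≤ ∫ X, f X ∂μ

/-- `M^{2×2}_+ = {X : X₁₂ > 0}`. -/
def Mplus : Set (Matrix (Fin 2) (Fin 2) ℝ) := {X | 0 < X 0 1}

/-- The partial Legendre transform `Ψ`. -/
def Psi (X : Matrix (Fin 2) (Fin 2) ℝ) : Matrix (Fin 2) (Fin 2) ℝ :=
  (X 0 1)⁻¹ • !![-(X 0 0), 1; -X.det, X 1 1]

/-- The dual function `h̃(X) = X₁₂ · h(Ψ(X))`. -/
def dualFn (h : Matrix (Fin 2) (Fin 2) ℝ → ℝ) (X : Matrix (Fin 2) (Fin 2) ℝ) : ℝ :=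
  X 0 1 * h (Psi X)

/-- The dual measure `μ̃`, characterised by
`∫ f dμ̃ = (1/μ̄₁₂) ∫ X₁₂ · f(Ψ(X)) dμ(X)` for all Borel `f : M → [0,∞]`. -/
def dualMeasure (μ : Measure (Matrix (Fin 2) (Fin 2) ℝ)) :
    Measure (Matrix (Fin 2) (Fin 2) ℝ) :=
  Measure.map Psi
    ((ENNReal.ofReal (matBarycenter μ 0 1))⁻¹ •
      μ.withDensity fun X => ENNReal.ofReal (X 0 1))

/-- The (topological) support of a measure. -/
def mSupport {α : Type*} [TopologicalSpace α] [MeasurableSpace α] (μ : Measure α) : Set α :=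
  {x | ∀ U : Set α, IsOpen U → x ∈ U → μ U ≠ 0}

/-- `f` is quasiconvex on the open set `U ⊆ ℝ^{2×2}`. -/
def IsQuasiconvexOn (U : Set (Matrix (Fin 2) (Fin 2) ℝ))
    (f : Matrix (Fin 2) (Fin 2) ℝ → ℝ) : Prop :=
  ∀ Ω : Set (Fin 2 → ℝ), IsOpen Ω → Ω.Nonempty → Bornology.IsBounded Ω →
    ∀ (A : Matrix (Fin 2) (Fin 2) ℝ) (φ : (Fin 2 → ℝ) → (Fin 2 → ℝ)),
      ContDiff ℝ (⊤ : ℕ∞) φ → HasCompactSupport φ → tsupport φ ⊆ Ω →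
      (∀ x, A + jacobianM 2 2 φ x ∈ U) →
      f A * (volume Ω).toReal ≤ ∫ x in Ω, f (A + jacobianM 2 2 φ x)

/-- `f` is rank-one convex on the open convex set `U ⊆ ℝ^{2×2}`. -/
def IsRankOneConvexOn (U : Set (Matrix (Fin 2) (Fin 2) ℝ))
    (f : Matrix (Fin 2) (Fin 2) ℝ → ℝ) : Prop :=
  ∀ X ∈ U, ∀ Y ∈ U, (X - Y).rank ≤ 1 →
    ∀ t : ℝ, t ∈ Set.Icc (0 : ℝ) 1 →
      f (t • X + (1 - t) • Y) ≤ t * f X + (1 - t) * f Y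

open scoped ENNReal NNReal

instance matrixBorelSpace : BorelSpace (Matrix (Fin 2) (Fin 2) ℝ) :=
  show BorelSpace (Fin 2 → Fin 2 → ℝ) from inferInstance

lemma measurable_entry (i j : Fin 2) : Measurable fun X : Matrix (Fin 2) (Fin 2) ℝ => X i j :=
  (measurable_pi_apply j).comp (measurable_pi_apply i)

lemma continuous_entry (i j : Fin 2) : Continuous fun X : Matrix (Fin 2) (Fin 2) ℝ => X i j :=
  (continuous_apply j).comp (continuous_apply i)

lemma Psi_apply (X : Matrix (Fin 2) (Fin 2) ℝ) (i j : Fin 2) :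
    Psi X i j = (X 0 1)⁻¹ * !![-(X 0 0), 1; -X.det, X 1 1] i j := rfl

lemma Psi_00 (X : Matrix (Fin 2) (Fin 2) ℝ) : Psi X 0 0 = (X 0 1)⁻¹ * (-(X 0 0)) := by
  simp [Psi_apply]
lemma Psi_01 (X : Matrix (Fin 2) (Fin 2) ℝ) : Psi X 0 1 = (X 0 1)⁻¹ := by
  simp [Psi_apply]
lemma Psi_10 (X : Matrix (Fin 2) (Fin 2) ℝ) : Psi X 1 0 = (X 0 1)⁻¹ * (-X.det) := by
  simp [Psi_apply]
lemma Psi_11 (X : Matrix (Fin 2) (Fin 2) ℝ) : Psi X 1 1 = (X 0 1)⁻¹ * X 1 1 := by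
  simp [Psi_apply]

lemma measurable_det : Measurable fun X : Matrix (Fin 2) (Fin 2) ℝ => X.det := by
  simp only [Matrix.det_fin_two]
  exact ((measurable_entry 0 0).mul (measurable_entry 1 1)).sub
    ((measurable_entry 0 1).mul (measurable_entry 1 0))

lemma continuous_det : Continuous fun X : Matrix (Fin 2) (Fin 2) ℝ => X.det := by
  simp only [Matrix.det_fin_two]
  exact ((continuous_entry 0 0).mul (continuous_entry 1 1)).sub
    ((continuous_entry 0 1).mul (continuous_entry 1 0))

lemma measurable_Psi : Measurable Psi := by
  apply measurable_pi_lambda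
  intro i
  apply measurable_pi_lambda
  intro j
  fin_cases i <;> fin_cases j <;>
    simp only [Fin.zero_eta, Fin.mk_one, Psi_00, Psi_01, Psi_10, Psi_11, Fin.isValue] <;>
    first
      | exact ((measurable_entry 0 1).inv).mul ((measurable_entry 0 0).neg)
      | exact (measurable_entry 0 1).inv
      | exact ((measurable_entry 0 1).inv).mul measurable_det.neg
      | exact ((measurable_entry 0 1).inv).mul (measurable_entry 1 1)

lemma Psi_Psi (X : Matrix (Fin 2) (Fin 2) ℝ) (h : X 0 1 ≠ 0) : Psi (Psi X) = X := by
  have hd : (Psi X).det = -(X 1 0) * (X 0 1)⁻¹ := by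
    rw [Matrix.det_fin_two, Psi_00, Psi_01, Psi_10, Psi_11, Matrix.det_fin_two]
    field_simp
    ring
  funext i j
  fin_cases i <;> fin_cases j <;>
    simp only [Fin.zero_eta, Fin.mk_one, Psi_00, Psi_01, Psi_10, Psi_11, hd, Fin.isValue] <;>
    field_simp

lemma continuousOn_Psi : ContinuousOn Psi {X : Matrix (Fin 2) (Fin 2) ℝ | X 0 1 ≠ 0} := by
  have h1 : Continuous fun X : Matrix (Fin 2) (Fin 2) ℝ =>
      (!![-(X 0 0), 1; -X.det, X 1 1] : Matrix (Fin 2) (Fin 2) ℝ) := by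
    apply continuous_matrix
    intro i j
    fin_cases i <;> fin_cases j <;>
      simp only [Fin.zero_eta, Fin.mk_one, Matrix.cons_val', Matrix.cons_val_zero,
        Matrix.cons_val_one, Matrix.head_cons, Matrix.empty_val', Matrix.cons_val_fin_one,
        Matrix.head_fin_const, Fin.isValue] <;>
      first
        | exact (continuous_entry 0 0).neg
        | exact continuous_const
        | exact continuous_det.neg
        | exact continuous_entry 1 1
  have h2 : ContinuousOn (fun X : Matrix (Fin 2) (Fin 2) ℝ => (X 0 1)⁻¹)
      {X | X 0 1 ≠ 0} :=
    ContinuousOn.inv₀ (continuous_entry 0 1).continuousOn fun x hx => hx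
  exact h2.smul h1.continuousOn

lemma lintegral_dualMeasure (σ : Measure (Matrix (Fin 2) (Fin 2) ℝ))
    (f : Matrix (Fin 2) (Fin 2) ℝ → ℝ≥0∞) (hf : Measurable f) :
    ∫⁻ Y, f Y ∂(dualMeasure σ) =
      (ENNReal.ofReal (matBarycenter σ 0 1))⁻¹ *
        ∫⁻ X, ENNReal.ofReal (X 0 1) * f (Psi X) ∂σ := by
  unfold dualMeasure
  rw [lintegral_map hf measurable_Psi, lintegral_smul_measure,
    lintegral_withDensity_eq_lintegral_mul σ
      ((measurable_entry 0 1).ennreal_ofReal)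
      (show Measurable fun X => f (Psi X) from hf.comp measurable_Psi)]
  simp only [Pi.mul_apply, smul_eq_mul]

lemma integral_dualMeasure (σ : Measure (Matrix (Fin 2) (Fin 2) ℝ))
    (hb : 0 ≤ matBarycenter σ 0 1)
    (g : Matrix (Fin 2) (Fin 2) ℝ → ℝ) (hg : Measurable g) :
    ∫ Y, g Y ∂(dualMeasure σ) =
      (matBarycenter σ 0 1)⁻¹ *
        ∫ X, ((X 0 1).toNNReal : ℝ) * g (Psi X) ∂σ := by
  unfold dualMeasure
  rw [integral_map measurable_Psi.aemeasurable hg.stronglyMeasurable.aestronglyMeasurable,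
    integral_smul_measure]
  have hden : (fun X : Matrix (Fin 2) (Fin 2) ℝ => ENNReal.ofReal (X 0 1)) =
      fun X => (((X 0 1).toNNReal : ℝ≥0) : ℝ≥0∞) := rfl
  rw [hden, integral_withDensity_eq_integral_smul
    ((measurable_entry 0 1).real_toNNReal) (fun X => g (Psi X))]
  rw [ENNReal.toReal_inv, ENNReal.toReal_ofReal hb, smul_eq_mul]
  simp only [NNReal.smul_def, smul_eq_mul]

lemma Psi_det (X : Matrix (Fin 2) (Fin 2) ℝ) (h : X 0 1 ≠ 0) :
    (Psi X).det = -(X 1 0) * (X 0 1)⁻¹ := by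
  rw [Matrix.det_fin_two, Psi_00, Psi_01, Psi_10, Psi_11, Matrix.det_fin_two]
  field_simp
  ring


/-- The map `μ ↦ μ̃` maps the polyconvex measures with compact support in `M^{2×2}_+`
bijectively onto themselves, and is an involution on this set. -/
theorem dualMeasure_polyconvex
    (μ : Measure (Matrix (Fin 2) (Fin 2) ℝ))
    (hprob : IsProbabilityMeasure μ)
    (hsupp : ∃ K : Set (Matrix (Fin 2) (Fin 2) ℝ), IsCompact K ∧ K ⊆ Mplus ∧ μ Kᶜ = 0)
    (hpc : ∫ X, X.det ∂μ = (matBarycenter μ).det) :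
    IsProbabilityMeasure (dualMeasure μ) ∧
    (∃ K : Set (Matrix (Fin 2) (Fin 2) ℝ), IsCompact K ∧ K ⊆ Mplus ∧
      (dualMeasure μ) Kᶜ = 0) ∧
    (∫ X, X.det ∂(dualMeasure μ) = (matBarycenter (dualMeasure μ)).det) ∧
    dualMeasure (dualMeasure μ) = μ := by
  obtain ⟨K, hKc, hKM, hKn⟩ := hsupp
  have hKmeas : MeasurableSet K := hKc.isClosed.measurableSet
  have hae : ∀ᵐ X ∂μ, X ∈ K := by
    rw [MeasureTheory.ae_iff]
    exact hKn
  have hint : ∀ g : Matrix (Fin 2) (Fin 2) ℝ → ℝ, Continuous g → Integrable g μ := by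
    intro g hg
    obtain ⟨C, hC⟩ := hKc.exists_bound_of_continuousOn hg.continuousOn
    exact (integrable_const C).mono' hg.aestronglyMeasurable
      (hae.mono fun X hX => hC X hX)
  have hXint : Integrable (fun X => X 0 1) μ := hint _ (continuous_entry 0 1)
  have hnn : 0 ≤ᵐ[μ] fun X : Matrix (Fin 2) (Fin 2) ℝ => X 0 1 :=
    hae.mono fun X hX => (hKM hX).le
  set b : ℝ := matBarycenter μ 0 1 with hbdef
  have hbpos : 0 < b := by
    have hbint : b = ∫ X, X 0 1 ∂μ := rfl
    rw [hbint, integral_pos_iff_support_of_nonneg_ae hnn hXint]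
    have hK1 : μ K = 1 := (prob_compl_eq_zero_iff hKmeas).mp hKn
    have hsub : K ⊆ Function.support fun X : Matrix (Fin 2) (Fin 2) ℝ => X 0 1 :=
      fun X hX => (hKM hX).ne'
    calc (0 : ℝ≥0∞) < 1 := by norm_num
    _ = μ K := hK1.symm
    _ ≤ _ := measure_mono hsub
  set c : ℝ≥0∞ := ENNReal.ofReal b with hcdef
  have hc0 : c ≠ 0 := (ENNReal.ofReal_pos.mpr hbpos).ne'
  have hcT : c ≠ ⊤ := ENNReal.ofReal_ne_top
  -- real integral transfer
  have key : ∀ g : Matrix (Fin 2) (Fin 2) ℝ → ℝ, Measurable g →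
      ∫ Y, g Y ∂(dualMeasure μ) = b⁻¹ * ∫ X, X 0 1 * g (Psi X) ∂μ := by
    intro g hg
    rw [integral_dualMeasure μ hbpos.le g hg]
    congr 1
    apply integral_congr_ae
    filter_upwards [hae] with X hX
    rw [Real.coe_toNNReal _ (hKM hX).le]
  -- barycentre entries
  have bar : ∀ i j : Fin 2, matBarycenter (dualMeasure μ) i j =
      b⁻¹ * ∫ X, X 0 1 * Psi X i j ∂μ := fun i j => key _ (measurable_entry i j)
  have hb00 : matBarycenter (dualMeasure μ) 0 0 = b⁻¹ * (-(matBarycenter μ 0 0)) := by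
    rw [bar 0 0]
    congr 1
    have he : (fun X : Matrix (Fin 2) (Fin 2) ℝ => X 0 1 * Psi X 0 0)
        =ᵐ[μ] fun X => -(X 0 0) := by
      filter_upwards [hae] with X hX
      rw [Psi_00, mul_inv_cancel_left₀ (hKM hX).ne']
    rw [integral_congr_ae he, integral_neg]
    rfl
  have hb01 : matBarycenter (dualMeasure μ) 0 1 = b⁻¹ := by
    rw [bar 0 1]
    have he : (fun X : Matrix (Fin 2) (Fin 2) ℝ => X 0 1 * Psi X 0 1)
        =ᵐ[μ] fun _ => (1 : ℝ) := by
      filter_upwards [hae] with X hX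
      rw [Psi_01, mul_inv_cancel₀ (hKM hX).ne']
    rw [integral_congr_ae he]
    simp
  have hb10 : matBarycenter (dualMeasure μ) 1 0 = b⁻¹ * (-(matBarycenter μ).det) := by
    rw [bar 1 0]
    congr 1
    have he : (fun X : Matrix (Fin 2) (Fin 2) ℝ => X 0 1 * Psi X 1 0)
        =ᵐ[μ] fun X => -X.det := by
      filter_upwards [hae] with X hX
      rw [Psi_10, mul_inv_cancel_left₀ (hKM hX).ne']
    rw [integral_congr_ae he, integral_neg, hpc]
  have hb11 : matBarycenter (dualMeasure μ) 1 1 = b⁻¹ * matBarycenter μ 1 1 := by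
    rw [bar 1 1]
    congr 1
    have he : (fun X : Matrix (Fin 2) (Fin 2) ℝ => X 0 1 * Psi X 1 1)
        =ᵐ[μ] fun X => X 1 1 := by
      filter_upwards [hae] with X hX
      rw [Psi_11, mul_inv_cancel_left₀ (hKM hX).ne']
    rw [integral_congr_ae he]
    rfl
  -- the four goals
  refine ⟨?_, ⟨Psi '' K, ?_, ?_, ?_⟩, ?_, ?_⟩
  · -- probability
    constructor
    have h1 := lintegral_dualMeasure μ (fun _ => 1) measurable_const
    rw [lintegral_one] at h1
    rw [h1]
    have h2 : ∫⁻ X, ENNReal.ofReal (X 0 1) * 1 ∂μ = c := by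
      simp only [mul_one]
      rw [hcdef, show b = ∫ X, X 0 1 ∂μ from rfl]
      exact (ofReal_integral_eq_lintegral_ofReal hXint hnn).symm
    rw [h2, ENNReal.inv_mul_cancel hc0 hcT]
  · exact hKc.image_of_continuousOn (continuousOn_Psi.mono fun X hX => (hKM hX).ne')
  · rintro Y ⟨X, hX, rfl⟩
    show 0 < Psi X 0 1
    rw [Psi_01]
    exact inv_pos.mpr (hKM hX)
  · -- null complement
    have hK'c : IsCompact (Psi '' K) :=
      hKc.image_of_continuousOn (continuousOn_Psi.mono fun X hX => (hKM hX).ne')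
    rw [dualMeasure, Measure.map_apply measurable_Psi hK'c.isClosed.measurableSet.compl]
    apply measure_mono_null (show Psi ⁻¹' (Psi '' K)ᶜ ⊆ Kᶜ from
      fun X hX hXK => hX ⟨X, hXK, rfl⟩)
    rw [Measure.smul_apply, withDensity_apply _ hKmeas.compl,
      setLIntegral_measure_zero _ _ hKn, smul_zero]
  · -- polyconvexity
    have hdet : ∫ Y, Y.det ∂(dualMeasure μ) = b⁻¹ * (-(matBarycenter μ 1 0)) := by
      rw [key _ measurable_det]
      congr 1
      have he : (fun X : Matrix (Fin 2) (Fin 2) ℝ => X 0 1 * (Psi X).det)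
          =ᵐ[μ] fun X => -(X 1 0) := by
        filter_upwards [hae] with X hX
        rw [Psi_det X (hKM hX).ne', mul_comm (-(X 1 0)) _, mul_inv_cancel_left₀ (hKM hX).ne']
      rw [integral_congr_ae he, integral_neg]
      rfl
    rw [hdet, Matrix.det_fin_two (matBarycenter (dualMeasure μ)), hb00, hb01, hb10, hb11]
    have hμdet : (matBarycenter μ).det =
        matBarycenter μ 0 0 * matBarycenter μ 1 1 - b * matBarycenter μ 1 0 := by
      rw [Matrix.det_fin_two]
    rw [hμdet]
    field_simp
    ring
  · -- involution
    have hc'eq : ENNReal.ofReal (matBarycenter (dualMeasure μ) 0 1) = ENNReal.ofReal b⁻¹ := by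
      rw [hb01]
    have hc'0 : ENNReal.ofReal (matBarycenter (dualMeasure μ) 0 1) ≠ 0 := by
      rw [hc'eq]
      exact (ENNReal.ofReal_pos.mpr (inv_pos.mpr hbpos)).ne'
    have hc'T : ENNReal.ofReal (matBarycenter (dualMeasure μ) 0 1) ≠ ⊤ :=
      ENNReal.ofReal_ne_top
    have hmul : ENNReal.ofReal (matBarycenter (dualMeasure μ) 0 1) * c = 1 := by
      rw [hc'eq, hcdef, ← ENNReal.ofReal_mul (inv_nonneg.mpr hbpos.le),
        inv_mul_cancel₀ hbpos.ne', ENNReal.ofReal_one]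
    ext s hs
    have hind : Measurable (s.indicator (1 : Matrix (Fin 2) (Fin 2) ℝ → ℝ≥0∞)) :=
      measurable_one.indicator hs
    have L1 := lintegral_dualMeasure (dualMeasure μ) (s.indicator 1) hind
    have L2 := lintegral_dualMeasure μ
      (fun Y => ENNReal.ofReal (Y 0 1) * s.indicator 1 (Psi Y))
      (((measurable_entry 0 1).ennreal_ofReal).mul (hind.comp measurable_Psi))
    have hinner : (fun X : Matrix (Fin 2) (Fin 2) ℝ =>
        ENNReal.ofReal (X 0 1) * (ENNReal.ofReal (Psi X 0 1) * s.indicator 1 (Psi (Psi X))))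
        =ᵐ[μ] s.indicator 1 := by
      filter_upwards [hae] with X hX
      have hpos := hKM hX
      rw [Psi_Psi X hpos.ne', Psi_01, ← mul_assoc, ← ENNReal.ofReal_mul hpos.le,
        mul_inv_cancel₀ hpos.ne', ENNReal.ofReal_one, one_mul]
    calc dualMeasure (dualMeasure μ) s
        = ∫⁻ Y, s.indicator 1 Y ∂(dualMeasure (dualMeasure μ)) :=
          (lintegral_indicator_one hs).symm
      _ = (ENNReal.ofReal (matBarycenter (dualMeasure μ) 0 1))⁻¹ *
            ∫⁻ X, ENNReal.ofReal (X 0 1) * s.indicator 1 (Psi X) ∂(dualMeasure μ) := L1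
      _ = (ENNReal.ofReal (matBarycenter (dualMeasure μ) 0 1))⁻¹ *
            (c⁻¹ * ∫⁻ X, ENNReal.ofReal (X 0 1) *
            (ENNReal.ofReal (Psi X 0 1) * s.indicator 1 (Psi (Psi X))) ∂μ) := by rw [L2]
      _ = (ENNReal.ofReal (matBarycenter (dualMeasure μ) 0 1))⁻¹ * (c⁻¹ * μ s) := by
          rw [lintegral_congr_ae hinner, lintegral_indicator_one hs]
      _ = μ s := by
          rw [← mul_assoc, ← ENNReal.mul_inv (Or.inr hcT) (Or.inl hc'T), hmul, inv_one,
            one_mul]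

end
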